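/- Let m = n + k and let L, R ∈ ℂ^{m×m} be unitary matrices, where L is a proper k-lower Hessenberg matrix and R is a k-upper Hessenberg matrix. Let Q = diag(I_k, Q̂) where Q̂ ∈ ℂ^{n×n} is a unitary upper Hessenberg matrix, let Z ∈ ℂ^{m×k}, let E = [I_k; 0_{n×k}], and set F = Q + E Z^H and Â = L F R. If the last k rows of Â are zero (i.e. Â(n+1:m, 1:m) = 0), then Â is an upper Hessenberg matrix (Â_{ij} = 0 whenever i > j + 1). -/
import Mathlib


open Matrix

/-- `M` is `k`-upper Hessenberg: `m_{ij} = 0` whenever `i > j + k`. -/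
def kUpperHessenberg (k : ℕ) {m : ℕ} (M : Matrix (Fin m) (Fin m) ℂ) : Prop :=
  ∀ i j : Fin m, j.1 + k < i.1 → M i j = 0

/-- `M` is `k`-lower Hessenberg: `m_{ij} = 0` whenever `j > i + k`. -/
def kLowerHessenberg (k : ℕ) {m : ℕ} (M : Matrix (Fin m) (Fin m) ℂ) : Prop :=
  ∀ i j : Fin m, i.1 + k < j.1 → M i j = 0

/-- A `k`-upper Hessenberg matrix is proper: the outermost entries `h_{j+k,j}` are
all nonzero. -/
def ProperUpper (k : ℕ) {m : ℕ} (M : Matrix (Fin m) (Fin m) ℂ) : Prop :=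
  ∀ i j : Fin m, i.1 = j.1 + k → M i j ≠ 0

/-- A `k`-lower Hessenberg matrix is proper: the outermost entries `h_{j,j+k}` are
all nonzero. -/
def ProperLower (k : ℕ) {m : ℕ} (M : Matrix (Fin m) (Fin m) ℂ) : Prop :=
  ∀ i j : Fin m, j.1 = i.1 + k → M i j ≠ 0

/-- The `n × k` matrix `E = [I_k; 0]` whose top `k × k` block is the identity. -/
def EkM (n k : ℕ) : Matrix (Fin n) (Fin k) ℂ :=
  Matrix.of fun x j => if x.1 = j.1 then 1 else 0

/-- The block diagonal matrix `diag(I_k, Q̂)` for `Q̂ ∈ ℂ^{n×n}`. -/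
def diagIQ (n k : ℕ) (Qh : Matrix (Fin n) (Fin n) ℂ) :
    Matrix (Fin (n + k)) (Fin (n + k)) ℂ :=
  Matrix.of fun x y =>
    if h : k ≤ x.1 ∧ k ≤ y.1 then Qh ⟨x.1 - k, by omega⟩ ⟨y.1 - k, by omega⟩
    else if x.1 = y.1 then 1 else 0

/-- **LFR decompositions yield Hessenberg form.**
Let `m = n + k`, let `L` be a proper unitary `k`-lower Hessenberg matrix and `R` a
unitary `k`-upper Hessenberg matrix. Let `Q = diag(I_k, Q̂)` with `Q̂` unitary upper
Hessenberg, and let `F = Q + E Z^H` with `E = [I_k; 0]`. If `Â = L F R` has its last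
`k` rows equal to zero, then `Â` is an upper Hessenberg matrix. -/
theorem LFR_hessenberg (n k : ℕ)
    (L R : Matrix (Fin (n + k)) (Fin (n + k)) ℂ)
    (hLu : L ∈ Matrix.unitaryGroup (Fin (n + k)) ℂ)
    (hLH : kLowerHessenberg k L) (hLp : ProperLower k L)
    (hRu : R ∈ Matrix.unitaryGroup (Fin (n + k)) ℂ)
    (hRH : kUpperHessenberg k R)
    (Qh : Matrix (Fin n) (Fin n) ℂ)
    (hQu : Qh ∈ Matrix.unitaryGroup (Fin n) ℂ)
    (hQH : kUpperHessenberg 1 Qh)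
    (Z : Matrix (Fin (n + k)) (Fin k) ℂ)
    (F : Matrix (Fin (n + k)) (Fin (n + k)) ℂ)
    (hF : F = diagIQ n k Qh + EkM (n + k) k * Z.conjTranspose)
    (Ahat : Matrix (Fin (n + k)) (Fin (n + k)) ℂ)
    (hAhat : Ahat = L * F * R)
    (hzero : ∀ x y : Fin (n + k), n ≤ x.1 → Ahat x y = 0) :
    kUpperHessenberg 1 Ahat := by

  -- Structure of `F`: below the first `k` rows it is upper Hessenberg.
  have hFz : ∀ x y : Fin (n + k), k ≤ x.1 → y.1 + 1 < x.1 → F x y = 0 := by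
    intro x y hkx hlt
    subst hF
    have h2 : (EkM (n + k) k * Z.conjTranspose) x y = 0 := by
      rw [Matrix.mul_apply]
      apply Finset.sum_eq_zero
      intro j _
      have : EkM (n + k) k x j = 0 := by
        simp only [EkM, Matrix.of_apply]
        rw [if_neg]
        omega
      rw [this, zero_mul]
    have h1 : diagIQ n k Qh x y = 0 := by
      simp only [diagIQ, Matrix.of_apply]
      by_cases hy : k ≤ y.1
      · rw [dif_pos ⟨hkx, hy⟩]
        exact hQH _ _ (by simp; omega)
      · rw [dif_neg (by omega), if_neg (by omega)]
    rw [Matrix.add_apply, h1, h2, add_zero]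
  -- `F * R` vanishes strictly below the `k+1`-st subdiagonal.
  have hFR : ∀ i l : Fin (n + k), l.1 + k + 1 < i.1 → (F * R) i l = 0 := by
    intro i l hil
    rw [Matrix.mul_apply]
    apply Finset.sum_eq_zero
    intro p _
    by_cases hp : p.1 + 1 < i.1
    · rw [hFz i p (by omega) hp, zero_mul]
    · rw [hRH p l (by omega), mul_zero]
  have hLA : F * R = star L * Ahat := by
    rw [hAhat, Matrix.mul_assoc, ← Matrix.mul_assoc (star L) L, hLu.1, Matrix.one_mul]
  have main : ∀ t : ℕ, ∀ r : Fin (n + k), n ≤ r.1 + t →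
      ∀ l : Fin (n + k), l.1 + 1 < r.1 → Ahat r l = 0 := by
    intro t
    induction t with
    | zero => intro r hr l _; exact hzero r l (by omega)
    | succ t ih =>
      intro r hr l hl
      by_cases hrn : n ≤ r.1
      · exact hzero r l hrn
      push_neg at hrn
      have hk : r.1 + k < n + k := by omega
      set i : Fin (n + k) := ⟨r.1 + k, hk⟩ with hi
      have h0 : (F * R) i l = 0 := hFR i l (by simp [hi]; omega)
      rw [hLA, Matrix.mul_apply] at h0
      have hsum : ∑ j, (star L) i j * Ahat j l = (star L) i r * Ahat r l := by
        apply Finset.sum_eq_single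
        · intro j _ hj
          have hjr : j.1 ≠ r.1 := fun h => hj (Fin.ext h)
          rcases lt_or_gt_of_ne hjr with h | h
          · have hz : L j i = 0 := hLH j i (by simp [hi]; omega)
            rw [Matrix.star_apply, hz, star_zero, zero_mul]
          · rw [ih j (by omega) l (by omega), mul_zero]
        · intro h; exact absurd (Finset.mem_univ r) h
      rw [hsum] at h0
      have hne : (star L) i r ≠ 0 := by
        rw [Matrix.star_apply, star_ne_zero]
        exact hLp r i (by simp [hi])
      exact (mul_eq_zero.mp h0).resolve_left hne
  intro x y hxy
  exact main n x (Nat.le_add_left n x.1) y hxy
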